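/- Let n − 1 > d > 1 and Φ = [1 | J − 2X^T] be a {±1}-valued d×n matrix with X {0,1}-valued and ⟨φ_1,φ_j⟩ ≥ 0 for all columns φ_j. Then the columns of Φ form an ETF for R^d if and only if X is the incidence matrix of a QSD(v,k,λ,r,b,x,y) with v = d, b = n−1, k = (v−w)/2, w = sqrt(v(b+1−v)/b), r = bk/v, λ = r(k−1)/(v−1), x = (v−3w)/4, y = (v−w)/4. -/

import Mathlib

open Finset

private lemma sum_one_sub_two' {n : ℕ} (u : Fin n → ℝ) :
    ∑ i, (1 - 2 * u i) = (n : ℝ) - 2 * ∑ i, u i := by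
  rw [Finset.sum_sub_distrib, ← Finset.mul_sum]
  simp

private lemma expand_prod' {n : ℕ} (u v : Fin n → ℝ) :
    ∑ i, (1 - 2 * u i) * (1 - 2 * v i)
      = (n : ℝ) - 2 * (∑ i, u i) - 2 * (∑ i, v i) + 4 * ∑ i, u i * v i := by
  have h : ∀ i, (1 - 2 * u i) * (1 - 2 * v i)
      = (1 - 2 * u i) - 2 * v i + 4 * (u i * v i) := fun i => by ring
  simp_rw [h]
  rw [Finset.sum_add_distrib, Finset.sum_sub_distrib, ← Finset.mul_sum, ← Finset.mul_sum,
    sum_one_sub_two']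

private lemma not_all_eq' {d b : ℕ} (hdb : d < b) (X : Matrix (Fin b) (Fin d) ℝ)
    (k t : ℝ)
    (hk : ∀ j, ∑ i, X j i * X j i = k) (htk : t < k) (ht0 : 0 ≤ t)
    (hall : ∀ j j' : Fin b, j ≠ j' → ∑ i, X j i * X j' i = t) : False := by
  have hexists : ∃ c : Fin b → ℝ, c ≠ 0 ∧ ∀ i, ∑ j, c j * X j i = 0 := by
    have hrank := X.vecMulLinear.finrank_range_add_finrank_ker
    have h1 : Module.finrank ℝ ↥(LinearMap.range X.vecMulLinear) ≤ d := by
      have := Submodule.finrank_le (LinearMap.range X.vecMulLinear)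
      simpa using this
    have h2 : Module.finrank ℝ ↥(LinearMap.ker X.vecMulLinear) ≠ 0 := by
      simp only [Module.finrank_fintype_fun_eq_card, Fintype.card_fin] at hrank
      omega
    have hne : LinearMap.ker X.vecMulLinear ≠ ⊥ := by
      intro hbot
      apply h2
      rw [hbot]
      exact finrank_bot ℝ _
    obtain ⟨c, hc, hc0⟩ := Submodule.exists_mem_ne_zero_of_ne_bot hne
    refine ⟨c, hc0, fun i => ?_⟩
    have h3 := congrFun (LinearMap.mem_ker.mp hc) i
    simpa [Matrix.vecMulLinear_apply, Matrix.vecMul, dotProduct] using h3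
  obtain ⟨c, hc0, hker⟩ := hexists
  have h0 : ∑ i, (∑ j, c j * X j i) ^ 2 = 0 := by
    simp only [hker]
    simp
  have hds : ∑ i, (∑ j, c j * X j i) ^ 2
      = ∑ j, ∑ j', (c j * c j') * ∑ i, X j i * X j' i := by
    simp_rw [sq, Finset.sum_mul_sum]
    rw [Finset.sum_comm]
    refine Finset.sum_congr rfl fun j _ => ?_
    rw [Finset.sum_comm]
    refine Finset.sum_congr rfl fun j' _ => ?_
    rw [Finset.mul_sum]
    exact Finset.sum_congr rfl fun i _ => by ring
  rw [hds] at h0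
  have hsplit : ∀ j : Fin b, ∑ j', (c j * c j') * ∑ i, X j i * X j' i
      = (k - t) * (c j) ^ 2 + t * (c j * ∑ j', c j') := by
    intro j
    rw [← Finset.add_sum_erase _ _ (mem_univ j), hk j]
    have : ∀ j' ∈ univ.erase j, (c j * c j') * ∑ i, X j i * X j' i = t * (c j * c j') := by
      intro j' hj'
      rw [hall j j' (Finset.ne_of_mem_erase hj').symm]
      ring
    rw [Finset.sum_congr rfl this, ← Finset.mul_sum, ← Finset.mul_sum,
      Finset.sum_erase_eq_sub (mem_univ j)]
    ring
  rw [Finset.sum_congr rfl fun j _ => hsplit j, Finset.sum_add_distrib,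
    ← Finset.mul_sum, ← Finset.mul_sum, ← Finset.sum_mul, ← sq] at h0
  have hQ : 0 < ∑ j, (c j) ^ 2 := by
    have hex : ∃ j, c j ≠ 0 := by
      by_contra hcon
      push_neg at hcon
      exact hc0 (funext fun j => hcon j)
    obtain ⟨j0, hj0⟩ := hex
    refine Finset.sum_pos' (fun j _ => sq_nonneg _) ⟨j0, mem_univ j0, by positivity⟩
  nlinarith [sq_nonneg (∑ j, c j)]

set_option maxHeartbeats 2000000 in
theorem flat_etf_iff_qsd (d b : ℕ) (hd : 1 < d) (hdb : d < b)
    (X : Matrix (Fin b) (Fin d) ℝ)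
    (h01 : ∀ j i, X j i = 0 ∨ X j i = 1)
    (hpos : ∀ j : Fin b, 0 ≤ ∑ i, (1 - 2 * X j i)) :
    (let Φ : Matrix (Fin d) (Fin (b + 1)) ℝ := fun i => Fin.cons 1 fun j => 1 - 2 * X j i
     (∀ j, ∑ i, Φ i j ^ 2 = (d : ℝ)) ∧
     (∃ α : ℝ, 0 < α ∧ Φ * Φ.transpose = α • 1) ∧
     (∃ γ : ℝ, ∀ j j' : Fin (b + 1), j ≠ j' → |∑ i, Φ i j * Φ i j'| = γ))
    ↔
    (let w : ℝ := Real.sqrt ((d : ℝ) * ((b : ℝ) + 1 - d) / b)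
     let k : ℝ := ((d : ℝ) - w) / 2
     let r : ℝ := (b : ℝ) * k / d
     let lam : ℝ := r * (k - 1) / ((d : ℝ) - 1)
     let x : ℝ := ((d : ℝ) - 3 * w) / 4
     let y : ℝ := ((d : ℝ) - w) / 4
     (∀ j, ∑ i, X j i = k) ∧
     (∀ i, ∑ j, X j i = r) ∧
     (∀ i i' : Fin d, i ≠ i' → ∑ j, X j i * X j i' = lam) ∧
     (∀ j j' : Fin b, j ≠ j' →
       (∑ i, X j i * X j' i = x ∨ ∑ i, X j i * X j' i = y)) ∧
     (∃ j j', j ≠ j' ∧ ∑ i, X j i * X j' i = x) ∧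
     (∃ j j', j ≠ j' ∧ ∑ i, X j i * X j' i = y)) := by
  have hd0 : (0:ℝ) < d := by positivity
  have hd1 : (1:ℝ) < d := by exact_mod_cast hd
  have hb0 : (0:ℝ) < b := by
    have : 0 < b := by omega
    exact_mod_cast this
  have hdb' : (d:ℝ) < b := by exact_mod_cast hdb
  set w : ℝ := Real.sqrt ((d : ℝ) * ((b : ℝ) + 1 - d) / b) with hwdef
  have harg : 0 ≤ (d:ℝ) * ((b:ℝ) + 1 - (d:ℝ)) / (b:ℝ) := by
    apply div_nonneg _ (le_of_lt hb0)
    nlinarith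
  have hw0 : 0 ≤ w := Real.sqrt_nonneg _
  have hw2 : w ^ 2 = (d:ℝ) * ((b:ℝ) + 1 - (d:ℝ)) / (b:ℝ) := Real.sq_sqrt harg
  have hbw2 : (b:ℝ) * w ^ 2 = (d:ℝ) * ((b:ℝ) + 1 - (d:ℝ)) := by
    rw [hw2]; field_simp
  have hwpos : 0 < w := by
    rw [hwdef]
    apply Real.sqrt_pos.mpr
    apply div_pos _ hb0
    nlinarith
  have h3 : (0:ℝ) < d * (d - 1) * (b + 1) := by
    apply mul_pos (mul_pos hd0 (by linarith)) (by linarith)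
  have hsqlt : w ^ 2 < (d:ℝ) ^ 2 := by nlinarith [hbw2, h3]
  have hwd : w < d := by nlinarith [hsqlt, hw0, hd0]
  have hdne : (d:ℝ) ≠ 0 := ne_of_gt hd0
  have hd1ne : (d:ℝ) - 1 ≠ 0 := by linarith
  constructor
  · -- forward
    intro h
    obtain ⟨h1, ⟨α, hα, htight⟩, ⟨γ, hγ⟩⟩ := h
    set Φ : Matrix (Fin d) (Fin (b + 1)) ℝ := fun i => Fin.cons 1 fun j => 1 - 2 * X j i
      with hPhi
    have hP0 : ∀ i, Φ i 0 = 1 := fun i => by simp [hPhi]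
    have hPs : ∀ i (j : Fin b), Φ i j.succ = 1 - 2 * X j i := fun i j => by simp [hPhi]
    have hent : ∀ i i', ∑ j, Φ i j * Φ i' j = if i = i' then α else 0 := by
      intro i i'
      have h2 := congrFun (congrFun htight i) i'
      simpa [Matrix.mul_apply, Matrix.transpose_apply, Matrix.smul_apply, Matrix.one_apply,
        smul_eq_mul, mul_ite, mul_one, mul_zero] using h2
    have hdiag : ∀ i, ∑ j, Φ i j * Φ i j = (b:ℝ) + 1 := by
      intro i
      rw [Fin.sum_univ_succ]
      have e1 : ∀ j : Fin b, Φ i j.succ * Φ i j.succ = 1 := by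
        intro j
        rw [hPs]
        rcases h01 j i with h | h <;> rw [h] <;> ring
      rw [Finset.sum_congr rfl fun j _ => e1 j, hP0]
      simp
      ring
    have hαval : α = (b:ℝ) + 1 := by
      have h2 := hent ⟨0, by omega⟩ ⟨0, by omega⟩
      rw [hdiag] at h2
      simpa using h2.symm
    have hγ0 : 0 ≤ γ := by
      have h2 := hγ 0 ⟨1, by omega⟩ (by simp [Fin.ext_iff])
      rw [← h2]
      exact abs_nonneg _
    have hcolabs : ∀ j : Fin b, |∑ i, (1 - 2 * X j i)| = γ := by
      intro j
      have h2 := hγ 0 j.succ (Fin.succ_ne_zero j).symm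
      simpa [hP0, hPs] using h2
    have hT1 : ∑ j' : Fin (b+1), (∑ i, Φ i j') ^ 2 = (d:ℝ) * α := by
      have e : ∀ j' : Fin (b+1), (∑ i, Φ i j') ^ 2 = ∑ i, ∑ i', Φ i j' * Φ i' j' := by
        intro j'; rw [sq, Finset.sum_mul_sum]
      rw [Finset.sum_congr rfl fun j' _ => e j', Finset.sum_comm]
      have e2 : ∀ i, ∑ j' : Fin (b+1), ∑ i', Φ i j' * Φ i' j' = α := by
        intro i
        rw [Finset.sum_comm]
        rw [Finset.sum_congr rfl fun i' _ => hent i i']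
        simp
      rw [Finset.sum_congr rfl fun i _ => e2 i]
      simp [Finset.sum_const, Fintype.card_fin, nsmul_eq_mul]
    have hT2 : ∑ j' : Fin (b+1), (∑ i, Φ i j') ^ 2 = (d:ℝ)^2 + b * γ^2 := by
      rw [Fin.sum_univ_succ]
      have e0 : ∑ i, Φ i (0 : Fin (b+1)) = (d:ℝ) := by simp [hP0]
      have es : ∀ j : Fin b, (∑ i, Φ i j.succ) ^ 2 = γ ^ 2 := by
        intro j
        rw [← sq_abs (∑ i, Φ i j.succ),
          show ∑ i, Φ i j.succ = ∑ i, (1 - 2 * X j i) from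
            Finset.sum_congr rfl fun i _ => hPs i j,
          hcolabs j]
      rw [e0, Finset.sum_congr rfl fun j _ => es j]
      simp [Finset.sum_const, Fintype.card_fin, nsmul_eq_mul]
    have hγw : γ = w := by
      have heq : (d:ℝ) * α = (d:ℝ)^2 + b * γ^2 := hT1.symm.trans hT2
      rw [hαval] at heq
      have h2 : γ ^ 2 = w ^ 2 := by
        rw [hw2]
        field_simp
        nlinarith [heq]
      have hz : (γ - w) * (γ + w) = 0 := by linear_combination h2
      rcases mul_eq_zero.mp hz with h4 | h4
      · linarith
      · linarith
    have hcolw : ∀ j : Fin b, ∑ i, (1 - 2 * X j i) = w := by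
      intro j
      have h2 := hcolabs j
      rw [hγw] at h2
      have hp := hpos j
      rcases (abs_eq hw0).mp h2 with h4 | h4
      · exact h4
      · linarith
    have hk : ∀ j : Fin b, ∑ i, X j i = ((d:ℝ) - w)/2 := by
      intro j
      have h2 := hcolw j
      rw [sum_one_sub_two'] at h2
      linarith
    have hr : ∀ i, ∑ j, X j i = (b:ℝ) * (((d:ℝ) - w)/2) / d := by
      intro i
      have h0 : ∑ i' ∈ univ.erase i, (∑ j, Φ i j * Φ i' j) = 0 := by
        apply Finset.sum_eq_zero
        intro i' hi'
        rw [hent i i', if_neg (Finset.ne_of_mem_erase hi').symm]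
      rw [Finset.sum_comm] at h0
      simp_rw [← Finset.mul_sum, Finset.sum_erase_eq_sub (Finset.mem_univ i)] at h0
      have e1 : ∀ j : Fin (b+1), Φ i j * ((∑ i', Φ i' j) - Φ i j)
          = Φ i j * (∑ i', Φ i' j) - Φ i j * Φ i j := fun j => by ring
      rw [Finset.sum_congr rfl fun j _ => e1 j, Finset.sum_sub_distrib, hdiag i,
        Fin.sum_univ_succ] at h0
      have e0 : Φ i (0:Fin (b+1)) * (∑ i', Φ i' (0:Fin (b+1))) = (d:ℝ) := by
        simp [hP0]
      have es : ∀ j : Fin b, Φ i j.succ * (∑ i', Φ i' j.succ) = (1 - 2*X j i) * w := by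
        intro j
        rw [hPs]
        congr 1
        rw [show ∑ i', Φ i' j.succ = ∑ i', (1 - 2 * X j i') from
          Finset.sum_congr rfl fun i' _ => hPs i' j]
        exact hcolw j
      rw [e0, Finset.sum_congr rfl fun j _ => es j, ← Finset.sum_mul, sum_one_sub_two'] at h0
      have key : w * (2*(d:ℝ)*(∑ j, X j i) - b*((d:ℝ)-w)) = 0 := by
        linear_combination (-(d:ℝ)) * h0 + hbw2
      have h6 := (mul_eq_zero.mp key).resolve_left (ne_of_gt hwpos)
      field_simp
      linarith [h6]
    have hlam : ∀ i i', i ≠ i' → ∑ j, X j i * X j i'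
        = ((b:ℝ)*(((d:ℝ)-w)/2)/d) * ((((d:ℝ)-w)/2) - 1) / ((d:ℝ)-1) := by
      intro i i' hne
      have h2 := hent i i'
      rw [if_neg hne, Fin.sum_univ_succ] at h2
      have e0 : Φ i 0 * Φ i' 0 = 1 := by rw [hP0, hP0]; ring
      have es : ∀ j : Fin b, Φ i j.succ * Φ i' j.succ
          = (1 - 2*X j i) * (1 - 2*X j i') := fun j => by rw [hPs, hPs]
      rw [e0, Finset.sum_congr rfl fun j _ => es j, expand_prod', hr i, hr i'] at h2
      have hL' : 4*(d:ℝ)*(∑ j, X j i * X j i') = 2*(b:ℝ)*((d:ℝ)-w) - ((b:ℝ)+1)*(d:ℝ) := by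
        field_simp at h2
        linarith [h2]
      have hpoly : 4*(d:ℝ)*((d:ℝ)-1)*(∑ j, X j i * X j i')
          = (b:ℝ)*((d:ℝ)-w)*(((d:ℝ)-w)-2) := by
        linear_combination ((d:ℝ)-1)*hL' - hbw2
      field_simp
      linear_combination hpoly
    have hxy : ∀ j j' : Fin b, j ≠ j' →
        (∑ i, X j i * X j' i = ((d:ℝ) - 3*w)/4 ∨ ∑ i, X j i * X j' i = ((d:ℝ) - w)/4) := by
      intro j j' hne
      have h2 := hγ j.succ j'.succ (fun hc => hne (Fin.succ_injective _ hc))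
      rw [hγw] at h2
      rw [show ∑ i, Φ i j.succ * Φ i j'.succ = ∑ i, (1 - 2*X j i) * (1 - 2*X j' i) from
        Finset.sum_congr rfl fun i _ => by rw [hPs, hPs], expand_prod', hk j, hk j'] at h2
      rcases (abs_eq hw0).mp h2 with h4 | h4
      · right; linarith
      · left; linarith
    have hkk : ∀ j, ∑ i, X j i * X j i = ((d:ℝ)-w)/2 := by
      intro j
      rw [Finset.sum_congr rfl fun i _ =>
        (by rcases h01 j i with h|h <;> rw [h] <;> ring : X j i * X j i = X j i)]
      exact hk j
    refine ⟨hk, hr, hlam, hxy, ?_, ?_⟩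
    · by_contra hcon
      push_neg at hcon
      refine not_all_eq' hdb X (((d:ℝ)-w)/2) (((d:ℝ)-w)/4) hkk (by linarith) (by linarith)
        (fun j j' hne => (hxy j j' hne).resolve_left (hcon j j' hne))
    · by_contra hcon
      push_neg at hcon
      have hne01 : (⟨0, by omega⟩ : Fin b) ≠ ⟨1, by omega⟩ := by simp [Fin.ext_iff]
      have hval := (hxy _ _ hne01).resolve_right (hcon _ _ hne01)
      have hnn : 0 ≤ ∑ i, X ⟨0, by omega⟩ i * X ⟨1, by omega⟩ i :=
        Finset.sum_nonneg fun i _ => by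
          rcases h01 ⟨0, by omega⟩ i with h|h <;> rcases h01 ⟨1, by omega⟩ i with h'|h' <;>
            rw [h, h'] <;> norm_num
      rw [hval] at hnn
      refine not_all_eq' hdb X (((d:ℝ)-w)/2) (((d:ℝ)-3*w)/4) hkk (by linarith) hnn
        (fun j j' hne => (hxy j j' hne).resolve_right (hcon j j' hne))
  · -- backward
    intro h
    obtain ⟨hk, hr, hlam, hxy, hex, hey⟩ := h
    have hscalar : (1:ℝ) + ((b:ℝ) - 2*((b:ℝ)*(((d:ℝ)-w)/2)/d) - 2*((b:ℝ)*(((d:ℝ)-w)/2)/d)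
        + 4*(((b:ℝ)*(((d:ℝ)-w)/2)/d) * ((((d:ℝ)-w)/2) - 1) / ((d:ℝ)-1))) = 0 := by
      field_simp
      linear_combination 4 * hbw2
    refine ⟨?_, ⟨(b:ℝ)+1, by positivity, ?_⟩, ⟨w, ?_⟩⟩
    · intro j
      refine Fin.cases ?_ (fun jb => ?_) j
      · simp
      · simp only [Fin.cons_succ]
        rw [Finset.sum_congr rfl (fun i _ =>
          (by rcases h01 jb i with h|h <;> rw [h] <;> ring : (1 - 2*X jb i)^2 = (1:ℝ)))]
        simp
    · ext i i'
      simp only [Matrix.mul_apply, Matrix.transpose_apply, Matrix.smul_apply,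
        Matrix.one_apply, smul_eq_mul]
      change ∑ j : Fin (b+1), (Fin.cons 1 (fun j => 1 - 2 * X j i) : Fin (b+1) → ℝ) j *
        (Fin.cons 1 (fun j => 1 - 2 * X j i') : Fin (b+1) → ℝ) j = _
      rw [Fin.sum_univ_succ]
      simp only [Fin.cons_zero, Fin.cons_succ, one_mul]
      by_cases hii : i = i'
      · subst hii
        rw [if_pos rfl, mul_one]
        rw [Finset.sum_congr rfl (fun j _ =>
          (by rcases h01 j i with h|h <;> rw [h] <;> ring :
            (1 - 2*X j i) * (1 - 2*X j i) = (1:ℝ)))]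
        simp
        ring
      · rw [if_neg hii, mul_zero, expand_prod', hr i, hr i', hlam i i' hii]
        exact hscalar
    · intro j j' hne
      rcases Fin.eq_zero_or_eq_succ j with rfl | ⟨ja, rfl⟩ <;>
        rcases Fin.eq_zero_or_eq_succ j' with rfl | ⟨jb, rfl⟩
      · exact absurd rfl hne
      · simp only [Fin.cons_zero, Fin.cons_succ, one_mul]
        rw [sum_one_sub_two', hk jb,
          show (d:ℝ) - 2*(((d:ℝ)-w)/2) = w from by ring]
        exact abs_of_nonneg hw0
      · simp only [Fin.cons_zero, Fin.cons_succ, mul_one]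
        rw [sum_one_sub_two', hk ja,
          show (d:ℝ) - 2*(((d:ℝ)-w)/2) = w from by ring]
        exact abs_of_nonneg hw0
      · have hne' : ja ≠ jb := fun hc => hne (by rw [hc])
        simp only [Fin.cons_succ]
        rw [expand_prod', hk ja, hk jb]
        rcases hxy ja jb hne' with h4 | h4 <;> rw [h4]
        · rw [show (d:ℝ) - 2*(((d:ℝ)-w)/2) - 2*(((d:ℝ)-w)/2) + 4*(((d:ℝ)-3*w)/4) = -w
            from by ring, abs_neg]
          exact abs_of_nonneg hw0
        · rw [show (d:ℝ) - 2*(((d:ℝ)-w)/2) - 2*(((d:ℝ)-w)/2) + 4*(((d:ℝ)-w)/4) = w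
            from by ring]
          exact abs_of_nonneg hw0
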